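/- A Helly-type selection lemma. Let X be a Banach space, T > 0, and let (δ_k)_{k∈ℕ} ⊂ (0,1) be a sequence with δ_k → 0⁺. For each k let v_k : [−δ_k, T] → X be a function of bounded variation, and assume the variations are equibounded: sup_k Var(v_k; [−δ_k, T]) < ∞. Then there exist an at most countable set N ⊂ [0,T] and a subsequence (k_j), independent of t, such that lim_{j→∞} ‖v_{k_j}(t − δ_{k_j}) − v_{k_j}(t)‖ = 0 for every t ∈ (0,T] \ N. -/

import Mathlib

open MeasureTheory Filter Set
open scoped RealInnerProductSpace Topology Pointwise ENNReal

noncomputable section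

/-- The Fréchet subdifferential of `S : E → ℝ` at `u`. -/
def fsub {E : Type*} [NormedAddCommGroup E] [InnerProductSpace ℝ E]
    (S : E → ℝ) (u : E) : Set E :=
  {ξ | 0 ≤ Filter.liminf (fun v => (S v - S u - ⟪ξ, v - u⟫) / ‖v - u‖) (𝓝[≠] u)}

/-- The convex subdifferential of `ψ : E → ℝ` at `v`. -/
def csub {E : Type*} [NormedAddCommGroup E] [InnerProductSpace ℝ E]
    (ψ : E → ℝ) (v : E) : Set E :=
  {ξ | ∀ w, ψ v + ⟪ξ, w - v⟫ ≤ ψ w}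

/-- `u` is a critical point of `S` on the affine space `{v | A v = fv}`. -/
def IsCritPt {E F : Type*} [NormedAddCommGroup E] [InnerProductSpace ℝ E]
    [FiniteDimensional ℝ E] [NormedAddCommGroup F] [InnerProductSpace ℝ F]
    [FiniteDimensional ℝ F] (A : E →ₗ[ℝ] F) (S : E → ℝ) (fv : F) (u : E) : Prop :=
  A u = fv ∧ (fsub S u ∩ Set.range (LinearMap.adjoint A)).Nonempty

/-- A discrete quasistatic evolution with time step `δ`, initial condition `v0`
and constraint `f` on the time interval `[-δ, T]`. -/
def IsDiscreteQE {E F : Type*} [NormedAddCommGroup E] [InnerProductSpace ℝ E]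
    [FiniteDimensional ℝ E] [NormedAddCommGroup F] [InnerProductSpace ℝ F]
    [FiniteDimensional ℝ F] (J ψ : E → ℝ) (α : ℝ) (A : E →ₗ[ℝ] F) (T δ : ℝ)
    (f : ℝ → F) (v0 : E) (vδ : ℝ → E) : Prop :=
  (∀ t ∈ Set.Ico (-δ) δ ∩ Set.Icc (-δ) T, vδ t = v0) ∧
  (∀ i : ℕ, (i : ℝ) * δ ≤ T →
    ∀ t ∈ Set.Icc (0 : ℝ) T ∩ Set.Ico ((i : ℝ) * δ) ((i : ℝ) * δ + δ),
      vδ t = vδ ((i : ℝ) * δ)) ∧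
  (∀ i : ℕ, (i : ℝ) * δ ≤ T →
    IsCritPt A (fun v => J v + α * ψ (v - vδ ((i : ℝ) * δ - δ))) (f ((i : ℝ) * δ))
      (vδ ((i : ℝ) * δ)))

/-- An approximable quasistatic evolution with initial condition `v0` and constraint `f`. -/
def IsApproxQE {E F : Type*} [NormedAddCommGroup E] [InnerProductSpace ℝ E]
    [FiniteDimensional ℝ E] [MeasurableSpace E] [BorelSpace E]
    [NormedAddCommGroup F] [InnerProductSpace ℝ F] [FiniteDimensional ℝ F]
    (J ψ : E → ℝ) (α : ℝ) (A : E →ₗ[ℝ] F) (T : ℝ) (f : ℝ → F)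
    (v0 : E) (v : ℝ → E) : Prop :=
  Measurable v ∧ (∃ C : ℝ, ∀ t ∈ Set.Icc (0 : ℝ) T, ‖v t‖ ≤ C) ∧
  ∀ t ∈ Set.Icc (0 : ℝ) T, ∃ (δ : ℕ → ℝ) (vd : ℕ → ℝ → E),
    (∀ k, δ k ∈ Set.Ioo (0 : ℝ) 1) ∧ Tendsto δ atTop (𝓝 0) ∧
    (∀ k, IsDiscreteQE J ψ α A T (δ k) f v0 (vd k)) ∧
    Filter.liminf (fun k => ‖vd k t - v t‖) atTop = 0

/-- `s` is the `ψ`-sum associated with some partition `a = t₀ < t₁ < ⋯ < t_k = b`. -/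
def IsPartSum {E : Type*} [NormedAddCommGroup E] (ψ : E → ℝ) (u : ℝ → E)
    (a b : ℝ) (s : ℝ) : Prop :=
  ∃ (k : ℕ) (t : ℕ → ℝ), t 0 = a ∧ t k = b ∧ (∀ i < k, t i < t (i + 1)) ∧
    s = ∑ i ∈ Finset.range k, ψ (u (t (i + 1)) - u (t i))

/-- The `ψ`-variation of `u` on `[a,b]`, as a real number (supremum of partition sums). -/
def psiVar {E : Type*} [NormedAddCommGroup E] (ψ : E → ℝ) (u : ℝ → E) (a b : ℝ) : ℝ :=
  sSup {s : ℝ | IsPartSum ψ u a b s}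

/-- The `ψ`-variation of `u` on `[a,b]`, with values in `[0,∞]`. -/
def psiVarE {E : Type*} [NormedAddCommGroup E] (ψ : E → ℝ) (u : ℝ → E) (a b : ℝ) : ℝ≥0∞ :=
  sSup {s : ℝ≥0∞ | ∃ r : ℝ, IsPartSum ψ u a b r ∧ s = ENNReal.ofReal r}

/-- The data of the incremental minimization algorithm: `vi i` is the approximate
solution at step `i` (a cluster point of the inner iterates `vseq i`), produced from
`vi (i-1)` by iteratively minimizing `v ↦ J v + η ‖v - wⱼ‖² + α ψ (v - vi (i-1))`. -/
def AlgData {E F : Type*} [NormedAddCommGroup E] [InnerProductSpace ℝ E]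
    [FiniteDimensional ℝ E] [NormedAddCommGroup F] [InnerProductSpace ℝ F]
    [FiniteDimensional ℝ F] (J ψ : E → ℝ) (α : ℝ) (A : E →ₗ[ℝ] F) (η T δ : ℝ)
    (f : ℝ → F) (v0 : E) (vi : ℕ → E) (vseq : ℕ → ℕ → E) : Prop :=
  vi 0 = v0 ∧
  ∀ i : ℕ, 1 ≤ i → (i : ℝ) * δ ≤ T →
    vseq i 0 = vi (i - 1) ∧
    (∀ j : ℕ, A (vseq i (j + 1)) = f ((i : ℝ) * δ) ∧
      ∀ u : E, A u = f ((i : ℝ) * δ) →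
        J (vseq i (j + 1)) + η * ‖vseq i (j + 1) - vseq i j‖ ^ 2
            + α * ψ (vseq i (j + 1) - vseq i 0)
          ≤ J u + η * ‖u - vseq i j‖ ^ 2 + α * ψ (u - vseq i 0)) ∧
    MapClusterPt (vi i) atTop (vseq i)

/-- The piecewise constant evolution associated with the algorithm outputs `vi`. -/
def AlgEvol {E : Type*} [NormedAddCommGroup E] (T δ : ℝ) (v0 : E) (vi : ℕ → E)
    (vδ : ℝ → E) : Prop :=
  (∀ t ∈ Set.Ico (-δ) (0 : ℝ), vδ t = v0) ∧
  (∀ i : ℕ, (i : ℝ) * δ ≤ T →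
    ∀ t ∈ Set.Icc (-δ) T ∩ Set.Ico ((i : ℝ) * δ) ((i : ℝ) * δ + δ), vδ t = vi i)


section helpers
variable {X : Type*} [NormedAddCommGroup X]

lemma partSum_single {u : ℝ → X} {a b : ℝ} (hab : a < b) :
    IsPartSum (fun x : X => ‖x‖) u a b ‖u b - u a‖ := by
  refine ⟨1, fun i => if i = 0 then a else b, by simp, by simp, ?_, by simp⟩
  intro i hi
  simp only [Nat.lt_one_iff] at hi
  subst hi
  simpa using hab

lemma partSum_extend {u : ℝ → X} {a b b' s : ℝ} (hbb' : b < b')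
    (h : IsPartSum (fun x : X => ‖x‖) u a b s) :
    IsPartSum (fun x : X => ‖x‖) u a b' (s + ‖u b' - u b‖) := by
  obtain ⟨k, t, h0, hk, hmono, hs⟩ := h
  refine ⟨k + 1, fun i => if i ≤ k then t i else b', by simp [h0], by simp, ?_, ?_⟩
  · intro i hi
    rcases lt_or_eq_of_le (Nat.lt_succ_iff.mp hi) with h' | h'
    · simp only [if_pos h'.le, if_pos (Nat.succ_le_of_lt h')]
      exact hmono i h'
    · subst h'
      simp only [le_refl, if_pos, Nat.succ_le_iff, lt_irrefl, if_neg (by omega : ¬ i + 1 ≤ i)]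
      rw [hk]; exact hbb'
  · rw [hs, Finset.sum_range_succ]
    congr 1
    · apply Finset.sum_congr rfl
      intro i hi
      have hik := Finset.mem_range.mp hi
      simp only [if_pos hik.le, if_pos (Nat.succ_le_of_lt hik)]
    · simp only [if_neg (by omega : ¬ k + 1 ≤ k), if_pos (le_refl k), hk]

/-- pointwise variation on `[a, t]` -/
noncomputable def pVar (u : ℝ → X) (a t : ℝ) : ℝ :=
  sSup {s | IsPartSum (fun x : X => ‖x‖) u a t s}

variable {u : ℝ → X} {a T C : ℝ}
  (hC : ∀ s, IsPartSum (fun x : X => ‖x‖) u a T s → s ≤ C)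

include hC in
lemma partSum_le {t s : ℝ} (ht : t ≤ T)
    (hs : IsPartSum (fun x : X => ‖x‖) u a t s) : s ≤ C := by
  rcases eq_or_lt_of_le ht with rfl | hlt
  · exact hC s hs
  · have := hC _ (partSum_extend hlt hs)
    have h2 : (0:ℝ) ≤ ‖u T - u t‖ := norm_nonneg _
    linarith

include hC in
lemma pVar_bddAbove {t : ℝ} (ht : t ≤ T) :
    BddAbove {s | IsPartSum (fun x : X => ‖x‖) u a t s} :=
  ⟨C, fun _ hs => partSum_le hC ht hs⟩

include hC in
lemma pVar_le {t : ℝ} (hat : a < t) (ht : t ≤ T) : pVar u a t ≤ C :=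
  csSup_le ⟨_, partSum_single hat⟩ (fun _ hs => partSum_le hC ht hs)

include hC in
lemma pVar_nonneg {t : ℝ} (hat : a < t) (ht : t ≤ T) : 0 ≤ pVar u a t :=
  le_trans (norm_nonneg (u t - u a)) (le_csSup (pVar_bddAbove hC ht) (partSum_single (u := u) hat))

include hC in
lemma pVar_key {t₁ t₂ : ℝ} (hat : a < t₁) (h12 : t₁ < t₂) (ht : t₂ ≤ T) :
    pVar u a t₁ + ‖u t₂ - u t₁‖ ≤ pVar u a t₂ := by
  rw [← le_sub_iff_add_le]
  refine csSup_le ⟨_, partSum_single hat⟩ (fun s hs => ?_)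
  rw [le_sub_iff_add_le]
  exact le_csSup (pVar_bddAbove hC ht) (partSum_extend h12 hs)

include hC in
lemma pVar_mono {t₁ t₂ : ℝ} (hat : a < t₁) (h12 : t₁ ≤ t₂) (ht : t₂ ≤ T) :
    pVar u a t₁ ≤ pVar u a t₂ := by
  rcases eq_or_lt_of_le h12 with rfl | hlt
  · exact le_rfl
  · have := pVar_key hC hat hlt ht
    have h2 : (0:ℝ) ≤ ‖u t₂ - u t₁‖ := norm_nonneg _
    linarith

end helpers

/-- A Helly-type selection lemma. -/
theorem helly_type_selection
    {X : Type*} [NormedAddCommGroup X] [NormedSpace ℝ X] [CompleteSpace X]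
    (T : ℝ) (hT : 0 < T)
    (δ : ℕ → ℝ) (hδ : ∀ k, δ k ∈ Set.Ioo (0 : ℝ) 1)
    (hδ0 : Tendsto δ atTop (𝓝 0))
    (v : ℕ → ℝ → X)
    -- each v k has bounded variation on [-δ k, T], with equibounded variations
    (hBV : ∃ C : ℝ, ∀ k : ℕ, ∀ s : ℝ,
      IsPartSum (fun x : X => ‖x‖) (v k) (-(δ k)) T s → s ≤ C) :
    ∃ N : Set ℝ, N.Countable ∧ N ⊆ Set.Icc 0 T ∧
      ∃ φ : ℕ → ℕ, StrictMono φ ∧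
        ∀ t ∈ Set.Ioc (0 : ℝ) T \ N,
          Tendsto (fun j => ‖v (φ j) (t - δ (φ j)) - v (φ j) t‖) atTop (𝓝 0) := by
  classical
  obtain ⟨C, hC⟩ := hBV
  set c : ℝ → ℝ := fun t => max 0 (min t T) with hc
  have hc0 : ∀ t, 0 ≤ c t := fun t => le_max_left _ _
  have hcT : ∀ t, c t ≤ T := fun t => max_le hT.le (min_le_right _ _)
  have hcmono : Monotone c := fun s t h => max_le_max le_rfl (min_le_min h le_rfl)
  have hceq : ∀ t, 0 ≤ t → t ≤ T → c t = t := by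
    intro t h0 h1
    simp only [hc, min_eq_left h1, max_eq_right h0]
  have halt : ∀ k t, -(δ k) < c t := fun k t =>
    lt_of_lt_of_le (neg_lt_zero.mpr (hδ k).1) (hc0 t)
  set Vc : ℕ → ℝ → ℝ := fun k t => pVar (v k) (-(δ k)) (c t) with hVc
  have hVmem : ∀ k t, Vc k t ∈ Set.Icc 0 C := fun k t =>
    ⟨pVar_nonneg (hC k) (halt k t) (hcT t), pVar_le (hC k) (halt k t) (hcT t)⟩
  have hVmono : ∀ k, Monotone (Vc k) := fun k s t h =>
    pVar_mono (hC k) (halt k s) (hcmono h) (hcT t)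
  have key : ∀ k t, 0 < t → t ≤ T → δ k < t →
      ‖v k (t - δ k) - v k t‖ ≤ Vc k t - Vc k (t - δ k) := by
    intro k t ht0 htT hδt
    have h1 : c t = t := hceq t ht0.le htT
    have h2 : c (t - δ k) = t - δ k := hceq _ (by linarith) (by linarith [(hδ k).1])
    have h3 := pVar_key (u := v k) (hC k) (t₁ := t - δ k) (t₂ := t)
      (by linarith) (by linarith [(hδ k).1]) htT
    rw [norm_sub_rev]
    simp only [hVc, h1, h2]
    linarith
  -- Helly-type selection via compactness of the countable product
  let W : ℕ → (ℚ → Set.Icc (0:ℝ) C) := fun k q => ⟨Vc k (q : ℝ), hVmem k q⟩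
  obtain ⟨L, -, φ, hφ, hLt⟩ :=
    IsCompact.tendsto_subseq (isCompact_univ (X := ℚ → Set.Icc (0:ℝ) C))
      (fun k => Set.mem_univ (W k))
  have hL : ∀ q : ℚ, Tendsto (fun j => Vc (φ j) (q : ℝ)) atTop (𝓝 (L q : ℝ)) := by
    intro q
    exact (continuous_subtype_val.tendsto (L q)).comp (tendsto_pi_nhds.mp hLt q)
  have hLmono : ∀ q q' : ℚ, q ≤ q' → (L q : ℝ) ≤ (L q' : ℝ) := by
    intro q q' h
    exact le_of_tendsto_of_tendsto' (hL q) (hL q')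
      (fun j => hVmono (φ j) (by exact_mod_cast h))
  set M : ℝ → ℝ := fun t => sSup ((fun q : ℚ => (L q : ℝ)) '' {q : ℚ | (q:ℝ) < t})
    with hM
  have hMne : ∀ t : ℝ, ((fun q : ℚ => (L q : ℝ)) '' {q : ℚ | (q:ℝ) < t}).Nonempty := by
    intro t
    obtain ⟨q, hq⟩ := exists_rat_lt t
    exact ⟨_, ⟨q, hq, rfl⟩⟩
  have hMbdd : ∀ t : ℝ, BddAbove ((fun q : ℚ => (L q : ℝ)) '' {q : ℚ | (q:ℝ) < t}) := by
    intro t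
    refine ⟨C, ?_⟩
    rintro x ⟨q, -, rfl⟩
    exact (L q).2.2
  have hML : ∀ (q : ℚ) (t : ℝ), (q:ℝ) < t → (L q : ℝ) ≤ M t := by
    intro q t hq
    exact le_csSup (hMbdd t) ⟨q, hq, rfl⟩
  have hLM : ∀ (q : ℚ) (t : ℝ), t ≤ (q:ℝ) → M t ≤ (L q : ℝ) := by
    intro q t hq
    refine csSup_le (hMne t) ?_
    rintro x ⟨q', hq', rfl⟩
    exact hLmono q' q (by exact_mod_cast le_of_lt (lt_of_lt_of_le hq' hq))
  have hMmono : Monotone M := by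
    intro s t h
    exact csSup_le_csSup (hMbdd t) (hMne s)
      (Set.image_mono (fun q hq => lt_of_lt_of_le hq h))
  refine ⟨Set.Icc 0 T ∩ {x | ¬ContinuousAt M x},
    (hMmono.countable_not_continuousAt).mono Set.inter_subset_right,
    Set.inter_subset_left, φ, hφ, ?_⟩
  rintro t ⟨⟨ht0, htT⟩, htN⟩
  have hcont : ContinuousAt M t := by
    by_contra h
    exact htN ⟨⟨ht0.le, htT⟩, h⟩
  rw [Metric.tendsto_atTop]
  intro ε hε
  obtain ⟨d, hd0, hd⟩ := Metric.continuousAt_iff.mp hcont (ε/4) (by positivity)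
  obtain ⟨q1, hq1a, hq1b⟩ := exists_rat_btwn (show t - d < t by linarith)
  obtain ⟨q2, hq2a, hq2b⟩ := exists_rat_btwn (show t < t + d/2 by linarith)
  have hb1 : M t - ε/4 < (L q1 : ℝ) := by
    have hdist : dist (q1 : ℝ) t < d := by
      rw [Real.dist_eq, abs_lt]; constructor <;> linarith
    have := hd hdist
    rw [Real.dist_eq, abs_lt] at this
    have h2 : M (q1 : ℝ) ≤ (L q1 : ℝ) := hLM q1 q1 le_rfl
    linarith [this.1]
  have hb2 : (L q2 : ℝ) < M t + ε/4 := by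
    have hdist : dist (t + 3*d/4) t < d := by
      rw [Real.dist_eq, abs_lt]; constructor <;> linarith
    have := hd hdist
    rw [Real.dist_eq, abs_lt] at this
    have h2 : (L q2 : ℝ) ≤ M (t + 3*d/4) := hML q2 _ (by linarith)
    linarith [this.2]
  have hδφ : Tendsto (fun j => δ (φ j)) atTop (𝓝 0) := hδ0.comp hφ.tendsto_atTop
  have e0 : ∀ᶠ j in atTop, δ (φ j) < t := hδφ.eventually_lt_const ht0
  have e1 : ∀ᶠ j in atTop, δ (φ j) < t - q1 := hδφ.eventually_lt_const (by linarith)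
  have e2 : ∀ᶠ j in atTop, Vc (φ j) (q2:ℝ) - Vc (φ j) (q1:ℝ) < 3*ε/4 :=
    ((hL q2).sub (hL q1)).eventually_lt_const (by linarith)
  obtain ⟨J, hJ⟩ := eventually_atTop.mp ((e0.and e1).and e2)
  refine ⟨J, fun j hj => ?_⟩
  obtain ⟨⟨h0, h1⟩, h2⟩ := hJ j hj
  have hkey := key (φ j) t ht0 htT h0
  have hm1 : Vc (φ j) t ≤ Vc (φ j) (q2:ℝ) := hVmono (φ j) hq2a.le
  have hm2 : Vc (φ j) (q1:ℝ) ≤ Vc (φ j) (t - δ (φ j)) := hVmono (φ j) (by linarith)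
  rw [Real.dist_eq, sub_zero, abs_of_nonneg (norm_nonneg _)]
  linarith


end
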